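/- For the root system A_n (n ≥ 2) and P_1 = ∑_{j=2}^{n+1} M(e_1 − e_j) − 2Iₙ, one has Q[P_1] = ∑_{r∈A_n} P_1[r]² = 2n(n−1)(n+1) and Tr(P_1²) = n(n−1); hence the eigenvalue of Q associated with P_1 equals 2(n+1). -/

import Mathlib

open Matrix
open scoped Classical

/-- The root system `Aₙ = {±(eᵢ − eⱼ) : i ≠ j} ⊆ ℝ^{n+1}`. -/
noncomputable def ARoots (n : ℕ) : Finset (Fin (n + 1) → ℝ) :=
  Finset.image (fun p : Fin (n + 1) × Fin (n + 1) =>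
      Pi.single p.1 (1 : ℝ) - Pi.single p.2 1)
    (Finset.univ.filter fun p => p.1 ≠ p.2)

/-- Orthogonal projection of `ℝ^{n+1}` onto the hyperplane `{v : ∑ vᵢ = 0}`
(the identity on the span of the root system `Aₙ`). -/
noncomputable def projA (n : ℕ) : Matrix (Fin (n + 1)) (Fin (n + 1)) ℝ :=
  1 - ((n : ℝ) + 1)⁻¹ • Matrix.of fun _ _ => (1 : ℝ)

/-- `Pᵢ = ∑_{j ≠ i} (eᵢ − eⱼ)(eᵢ − eⱼ)ᵀ − 2·Iₙ`, where `Iₙ` is the identity on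
the span of `Aₙ`. -/
noncomputable def PA (n : ℕ) (i : Fin (n + 1)) : Matrix (Fin (n + 1)) (Fin (n + 1)) ℝ :=
  (∑ j ∈ Finset.univ.erase i,
      Matrix.vecMulVec (Pi.single i 1 - Pi.single j 1) (Pi.single i 1 - Pi.single j 1))
    - (2 : ℝ) • projA n

noncomputable def EA (n : ℕ) : Matrix (Fin (n+1)) (Fin (n+1)) ℝ :=
  Matrix.of fun a b =>
    if a = 0 then (if b = 0 then (n:ℝ) - 2 + 2/((n:ℝ)+1) else -1 + 2/((n:ℝ)+1))
    else if b = 0 then -1 + 2/((n:ℝ)+1)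
    else if a = b then -1 + 2/((n:ℝ)+1) else 2/((n:ℝ)+1)

lemma PA_eq (n : ℕ) : PA n 0 = EA n := by
  ext a b
  have hcard : (Finset.univ.erase (0 : Fin (n+1))).card = n := by
    simp [Finset.card_erase_of_mem]
  simp only [PA, EA, Matrix.sub_apply, Matrix.sum_apply, Matrix.smul_apply,
    projA, Matrix.vecMulVec_apply, Matrix.one_apply, Matrix.of_apply, Pi.sub_apply,
    Pi.single_apply, smul_eq_mul]
  by_cases ha : a = 0 <;> by_cases hb : b = 0
  · subst ha; subst hb
    rw [Finset.sum_congr rfl (fun j hj => (by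
      rw [Finset.mem_erase] at hj
      simp [Ne.symm hj.1] : _ = (1:ℝ)))]
    rw [Finset.sum_const, hcard]
    simp
    ring
  · subst ha
    rw [Finset.sum_congr rfl (fun j hj => (by
      rw [Finset.mem_erase] at hj
      by_cases h : b = j <;> simp [Ne.symm hj.1, h, hb, hj.1] : _ = if b = j then (-1:ℝ) else 0))]
    rw [Finset.sum_ite_eq]
    simp [Finset.mem_erase, hb, eq_comm]
    ring
  · subst hb
    rw [Finset.sum_congr rfl (fun j hj => (by
      rw [Finset.mem_erase] at hj
      by_cases h : a = j <;> simp [Ne.symm hj.1, h, ha, hj.1] : _ = if a = j then (-1:ℝ) else 0))]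
    rw [Finset.sum_ite_eq]
    simp [Finset.mem_erase, ha, Ne.symm ha]
    ring
  · by_cases hab : a = b
    · subst hab
      rw [Finset.sum_congr rfl (fun j hj => (by
        rw [Finset.mem_erase] at hj
        by_cases h : a = j <;> simp [ha, h, hj.1] : _ = if a = j then (1:ℝ) else 0))]
      rw [Finset.sum_ite_eq]
      simp [Finset.mem_erase, ha]
      ring
    · rw [Finset.sum_congr rfl (fun j hj => (by
        by_cases h : a = j
        · subst h
          have hba : ¬ b = a := fun h' => hab h'.symm
          simp [ha, hb, hba]
        · simp [h, ha, hb] : _ = (0:ℝ)))]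
      simp [ha, hb, hab, Ne.symm ha, Ne.symm hb]
      ring


-- quadform general lemma
lemma quadform {n : ℕ} (M : Matrix (Fin (n+1)) (Fin (n+1)) ℝ) (i j : Fin (n+1)) :
    (Pi.single i (1:ℝ) - Pi.single j 1) ⬝ᵥ (M *ᵥ (Pi.single i (1:ℝ) - Pi.single j 1))
      = M i i - M i j - M j i + M j j := by
  simp [sub_dotProduct, mulVec_sub, dotProduct_sub, mulVec_single, single_dotProduct]
  ring

-- sum helpers
lemma sumA {n : ℕ} (f : Fin (n+1) → ℝ) (i : Fin (n+1)) (C : ℝ)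
    (h : ∀ j, j ≠ i → f j = C) : ∑ j, f j = f i + n * C := by
  rw [← Finset.add_sum_erase _ f (Finset.mem_univ i)]
  congr 1
  rw [Finset.sum_congr rfl (fun j hj => h j (Finset.mem_erase.mp hj).1),
    Finset.sum_const, Finset.card_erase_of_mem (Finset.mem_univ i)]
  simp [mul_comm]

lemma sumB {n : ℕ} (hn : 1 ≤ n) (f : Fin (n+1) → ℝ) (i k : Fin (n+1)) (hik : i ≠ k) (C : ℝ)
    (h : ∀ j, j ≠ i → j ≠ k → f j = C) : ∑ j, f j = f i + f k + ((n:ℝ) - 1) * C := by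
  rw [← Finset.add_sum_erase _ f (Finset.mem_univ i),
    ← Finset.add_sum_erase _ f (Finset.mem_erase.mpr ⟨Ne.symm hik, Finset.mem_univ k⟩)]
  have hrw : ∑ j ∈ (Finset.univ.erase i).erase k, f j = ((n + 1 - 1 - 1 : ℕ) : ℝ) * C := by
    rw [Finset.sum_congr rfl (fun j hj => by
        obtain ⟨hjk, hji, -⟩ := Finset.mem_erase.mp hj |>.imp id (fun h' => Finset.mem_erase.mp h')
        exact h j hji hjk),
      Finset.sum_const, Finset.card_erase_of_mem
        (Finset.mem_erase.mpr ⟨Ne.symm hik, Finset.mem_univ k⟩),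
      Finset.card_erase_of_mem (Finset.mem_univ i)]
    simp [mul_comm]
  rw [hrw]
  have : ((n + 1 - 1 - 1 : ℕ) : ℝ) = (n : ℝ) - 1 := by
    have : n + 1 - 1 - 1 = n - 1 := rfl
    rw [this, Nat.cast_sub hn]; norm_num
  rw [this]
  ring

lemma root_inj {n : ℕ} : ∀ p ∈ Finset.univ.filter (fun p : Fin (n+1) × Fin (n+1) => p.1 ≠ p.2),
    ∀ q ∈ Finset.univ.filter (fun p : Fin (n+1) × Fin (n+1) => p.1 ≠ p.2),
    ((Pi.single p.1 (1:ℝ) - Pi.single p.2 1 : Fin (n+1) → ℝ)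
      = (Pi.single q.1 (1:ℝ) - Pi.single q.2 1 : Fin (n+1) → ℝ)) → p = q := by
  rintro ⟨i, j⟩ hp ⟨k, l⟩ hq h
  simp only [Finset.mem_filter] at hp hq
  have hij : i ≠ j := hp.2
  have hkl : k ≠ l := hq.2
  have h1 := congrFun h i
  have h2 := congrFun h j
  simp only [Pi.sub_apply, Pi.single_apply] at h1 h2
  have hik : i = k := by
    by_contra h3
    by_cases h4 : i = l
    · subst h4
      simp only [if_pos rfl, if_neg hij, if_neg h3] at h1
      norm_num at h1
    · simp only [if_pos rfl, if_neg hij, if_neg h3, if_neg h4] at h1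
      norm_num at h1
  subst hik
  have hji : j ≠ i := Ne.symm hij
  have hjl : j = l := by
    by_contra h4
    simp [hji, h4] at h2
  subst hjl
  rfl


theorem PA_quadform_eigenvalue {n : ℕ} (hn : 2 ≤ n) :
    (∑ r ∈ ARoots n, (r ⬝ᵥ (PA n 0 *ᵥ r)) ^ 2 = 2 * n * ((n : ℝ) - 1) * ((n : ℝ) + 1)) ∧
      Matrix.trace (PA n 0 * PA n 0) = n * ((n : ℝ) - 1) ∧
      ∑ r ∈ ARoots n, (r ⬝ᵥ (PA n 0 *ᵥ r)) ^ 2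
        = 2 * ((n : ℝ) + 1) * Matrix.trace (PA n 0 * PA n 0) := by
  have hn' : 1 ≤ n := le_trans one_le_two hn
  have hn1 : ((n : ℝ) + 1) ≠ 0 := by positivity
  set c : ℝ := 2 / ((n : ℝ) + 1) with hc
  -- values of the quadratic form
  have hT : ∀ i j : Fin (n + 1),
      (if i ≠ j then
          ((Pi.single i (1:ℝ) - Pi.single j 1) ⬝ᵥ
            (EA n *ᵥ (Pi.single i (1:ℝ) - Pi.single j 1))) ^ 2
        else 0)
      = if i = j then 0 else if i = 0 ∨ j = 0 then ((n:ℝ) - 1) ^ 2 else 4 := by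
    intro i j
    by_cases hij : i = j
    · simp [hij]
    · rw [if_pos hij, if_neg hij, quadform]
      by_cases hi : i = 0
      · subst hi
        have hj : j ≠ 0 := Ne.symm hij
        simp only [EA, Matrix.of_apply, if_true, eq_self_iff_true, if_neg hj, true_or, if_pos rfl]
        ring
      · by_cases hj : j = 0
        · subst hj
          simp [EA, hi]
          ring
        · have hji : j ≠ i := Ne.symm hij
          simp [EA, hi, hj, hij, hji]
          ring
  have hQ : ∑ r ∈ ARoots n, (r ⬝ᵥ (PA n 0 *ᵥ r)) ^ 2 = 2 * n * ((n:ℝ) - 1) * ((n:ℝ) + 1) := by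
    rw [ARoots, Finset.sum_image root_inj, PA_eq, Finset.sum_filter, Fintype.sum_prod_type]
    have step : (∑ i : Fin (n+1), ∑ j : Fin (n+1),
        if (i, j).1 ≠ (i, j).2 then
          ((Pi.single (i, j).1 (1:ℝ) - Pi.single (i, j).2 1) ⬝ᵥ
            (EA n *ᵥ (Pi.single (i, j).1 (1:ℝ) - Pi.single (i, j).2 1))) ^ 2
        else 0)
        = ∑ i : Fin (n+1), ∑ j : Fin (n+1),
            if i = j then 0 else if i = 0 ∨ j = 0 then ((n:ℝ) - 1) ^ 2 else 4 :=
      Finset.sum_congr rfl fun i _ => Finset.sum_congr rfl fun j _ => hT i j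
    rw [step]
    have inner0 : (∑ j : Fin (n+1),
        if (0:Fin (n+1)) = j then 0 else if (0:Fin (n+1)) = 0 ∨ j = 0 then ((n:ℝ) - 1) ^ 2 else 4)
        = 0 + n * ((n:ℝ) - 1) ^ 2 := by
      rw [sumA _ 0 (((n:ℝ) - 1) ^ 2) (fun j hj => by simp [Ne.symm hj])]
      simp
    have innerI : ∀ i : Fin (n+1), i ≠ 0 → (∑ j : Fin (n+1),
        if i = j then 0 else if i = 0 ∨ j = 0 then ((n:ℝ) - 1) ^ 2 else 4)
        = ((n:ℝ) - 1) ^ 2 + ((n:ℝ) - 1) * 4 := by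
      intro i hi
      rw [sumB hn' _ 0 i (Ne.symm hi) 4 (fun j hj0 hji => by
        simp [Ne.symm hji, hi, hj0])]
      simp [Ne.symm hi, hi]
    rw [sumA _ 0 (((n:ℝ) - 1) ^ 2 + ((n:ℝ) - 1) * 4) (fun i hi => innerI i hi), inner0]
    ring
  have hTr : Matrix.trace (PA n 0 * PA n 0) = n * ((n:ℝ) - 1) := by
    rw [PA_eq]
    simp only [Matrix.trace, Matrix.diag_apply, Matrix.mul_apply]
    have inner0 : (∑ b : Fin (n+1), EA n 0 b * EA n b 0)
        = ((n:ℝ) - 2 + c) * ((n:ℝ) - 2 + c) + n * ((-1 + c) * (-1 + c)) := by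
      rw [sumA _ 0 ((-1 + c) * (-1 + c)) (fun b hb => by simp [EA, hb, hc])]
      simp [EA, hc]
    have innerI : ∀ a : Fin (n+1), a ≠ 0 → (∑ b : Fin (n+1), EA n a b * EA n b a)
        = (-1 + c) * (-1 + c) + (-1 + c) * (-1 + c) + ((n:ℝ) - 1) * (c * c) := by
      intro a ha
      rw [sumB hn' _ 0 a (Ne.symm ha) (c * c) (fun b hb0 hba => by
        simp [EA, ha, hb0, hba, Ne.symm hba, hc])]
      simp [EA, ha, hc]
    rw [sumA _ 0 ((-1 + c) * (-1 + c) + (-1 + c) * (-1 + c) + ((n:ℝ) - 1) * (c * c))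
      (fun a ha => innerI a ha), inner0, hc]
    field_simp
    ring
  exact ⟨hQ, hTr, by rw [hQ, hTr]; ring⟩
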